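/- arXiv:2605.04990 — 2 statements merged into one kernel-verified Lean document; each statement's English description precedes it below -/
import Mathlib

section
/- Fix b ≥ 0. For every ℓ ∈ ℕ, among all integers a such that (a,b)^T has a representation over {p,m} in base M = [[1,1],[0,1]] in which the digit m occurs exactly ℓ times, the maximum value of a is b(b-1)/2 + 2bℓ + ℓ² and the minimum value of a is b(b-1)/2 - ℓ². -/
/-- The Jordan block `[[1,1],[0,1]]`. -/
def M1 : Matrix (Fin 2) (Fin 2) ℤ := !![1, 1; 0, 1]

/-- The digit `p = (0,1)ᵀ`. -/
def pd : Fin 2 → ℤ := ![0, 1]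

/-- The digit `m = (0,-1)ᵀ`. -/
def md : Fin 2 → ℤ := ![0, -1]

/-- The vector represented by the word `d_{k-1} … d_0`, namely `∑ M^i d_i`. -/
def val1 {k : ℕ} (d : Fin k → (Fin 2 → ℤ)) : Fin 2 → ℤ :=
  ∑ i : Fin k, (M1 ^ (i : ℕ)).mulVec (d i)

/-- The set of first coordinates `a` such that `(a,b)ᵀ` has a representation over `{p,m}`
in which the digit `m` occurs exactly `ℓ` times. -/
def Sset (b ℓ : ℕ) : Set ℤ :=
  {a : ℤ | ∃ (k : ℕ) (d : Fin k → (Fin 2 → ℤ)),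
    (∀ i, d i = pd ∨ d i = md) ∧
    (Finset.univ.filter (fun i : Fin k => d i = md)).card = ℓ ∧
    val1 d = ![a, (b : ℤ)]}

lemma M1pow (n : ℕ) : M1 ^ n = !![1, (n:ℤ); 0, 1] := by
  induction n with
  | zero => simp [Matrix.one_fin_two]
  | succ n ih => rw [pow_succ, ih]; simp [M1, Matrix.mul_fin_two]; ring_nf

lemma pm_ne : (![0, 1] : Fin 2 → ℤ) ≠ ![0, -1] := by
  intro h; have := congrFun h 1; simp at this

lemma val_comp {k : ℕ} (d : Fin k → (Fin 2 → ℤ)) (hd : ∀ i, d i = pd ∨ d i = md) :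
    val1 d 1 = (k:ℤ) - 2 * ((Finset.univ.filter (fun i : Fin k => d i = md)).card : ℤ) ∧
    val1 d 0 = (∑ i : Fin k, (i:ℤ))
      - 2 * ∑ i ∈ Finset.univ.filter (fun i : Fin k => d i = md), (i:ℤ) := by
  have hne := pm_ne
  constructor
  · have : ∀ i : Fin k, ((M1 ^ (i:ℕ)).mulVec (d i)) 1 = 1 - 2 * (if d i = md then 1 else 0) := by
      intro i
      rcases hd i with h | h <;>
        simp [h, M1pow, Matrix.mulVec, dotProduct, pd, md, Fin.sum_univ_two, hne]
    simp only [val1, Finset.sum_apply, this, Finset.sum_sub_distrib, ← Finset.mul_sum,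
      Finset.sum_ite_eq', Finset.sum_boole]
    simp
  · have : ∀ i : Fin k, ((M1 ^ (i:ℕ)).mulVec (d i)) 0
        = (i:ℤ) - 2 * (if d i = md then (i:ℤ) else 0) := by
      intro i
      rcases hd i with h | h <;>
        simp [h, M1pow, Matrix.mulVec, dotProduct, pd, md, Fin.sum_univ_two, hne] <;> ring
    simp only [val1, Finset.sum_apply, this, Finset.sum_sub_distrib, ← Finset.mul_sum,
      Finset.sum_ite, Finset.sum_const_zero, add_zero]

lemma strictMono_le {n : ℕ} (f : Fin n → ℕ) (hf : StrictMono f) : ∀ j : Fin n, (j:ℕ) ≤ f j := by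
  intro ⟨j, hj⟩
  induction j with
  | zero => exact Nat.zero_le _
  | succ i ih =>
    have hi : i < n := Nat.lt_of_succ_lt hj
    have h1 := ih hi
    have h2 : f ⟨i, hi⟩ < f ⟨i+1, hj⟩ := hf (by simp [Fin.lt_def])
    simp only [Fin.val_mk] at h1 h2 ⊢
    omega

lemma sum_lb_nat {k : ℕ} (s : Finset (Fin k)) :
    ∑ j ∈ Finset.range s.card, j ≤ ∑ i ∈ s, (i:ℕ) := by
  set ℓ := s.card with hℓ
  have e := s.orderIsoOfFin hℓ.symm
  have hf : StrictMono (fun j : Fin ℓ => ((e j : Fin k) : ℕ)) := by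
    intro a b hab; exact e.strictMono hab
  have hsum : ∑ i ∈ s, (i:ℕ) = ∑ j : Fin ℓ, ((e j : Fin k) : ℕ) := by
    rw [← Finset.sum_coe_sort s (fun i => (i:ℕ))]
    exact (Equiv.sum_comp e.toEquiv _).symm
  rw [hsum, ← Fin.sum_univ_eq_sum_range]
  exact Finset.sum_le_sum fun j _ => strictMono_le _ hf j

lemma gauss (n : ℕ) : 2 * ∑ j ∈ Finset.range n, (j:ℤ) = (n:ℤ) * ((n:ℤ) - 1) := by
  induction n with
  | zero => simp
  | succ n ih => rw [Finset.sum_range_succ]; push_cast; push_cast at ih; linarith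

lemma sum_lb {k : ℕ} (s : Finset (Fin k)) :
    (s.card:ℤ) * ((s.card:ℤ) - 1) ≤ 2 * ∑ i ∈ s, ((i:ℕ):ℤ) := by
  have h := sum_lb_nat s
  have h2 : (↑(∑ j ∈ Finset.range s.card, j) : ℤ) ≤ ↑(∑ i ∈ s, (i:ℕ)) := by exact_mod_cast h
  push_cast at h2
  rw [← gauss]
  linarith

lemma sum_ub {k : ℕ} (s : Finset (Fin k)) :
    2 * ∑ i ∈ s, ((i:ℕ):ℤ) ≤ (s.card:ℤ) * (2*(k:ℤ) - (s.card:ℤ) - 1) := by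
  have hrev : Function.Injective (Fin.rev : Fin k → Fin k) := Fin.rev_injective
  set t := s.image Fin.rev with ht
  have hcard : t.card = s.card := Finset.card_image_of_injective s hrev
  have h := sum_lb t
  rw [hcard] at h
  have hsum : ∑ i ∈ t, ((i:ℕ):ℤ) = ∑ i ∈ s, ((Fin.rev i : Fin k):ℤ) :=
    Finset.sum_image (fun a _ b _ hab => hrev hab)
  have hrv : ∀ i : Fin k, ((Fin.rev i : Fin k):ℤ) = (k:ℤ) - 1 - (i:ℕ) := by
    intro i
    have : (Fin.rev i : ℕ) = k - 1 - (i:ℕ) := by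
      simp [Fin.rev]; omega
    rw [this]
    have hik : (i:ℕ) < k := i.isLt
    push_cast [Nat.cast_sub (by omega : (i:ℕ) ≤ k - 1), Nat.cast_sub (by omega : 1 ≤ k)]
    ring
  rw [hsum, Finset.sum_congr rfl (fun i _ => hrv i), Finset.sum_sub_distrib,
    Finset.sum_const, nsmul_eq_mul] at h
  linarith

lemma range_ite_sum {Mo : Type*} [AddCommMonoid Mo] (c k : ℕ) (h : c ≤ k) (f : ℕ → Mo) :
    ∑ j ∈ Finset.range k, (if j < c then f j else 0) = ∑ j ∈ Finset.range c, f j := by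
  rw [Finset.range_eq_Ico, ← Finset.sum_Ico_consecutive _ (Nat.zero_le c) h]
  have h1 : ∑ j ∈ Finset.Ico 0 c, (if j < c then f j else 0) = ∑ j ∈ Finset.Ico 0 c, f j :=
    Finset.sum_congr rfl (fun j hj => if_pos (Finset.mem_Ico.mp hj).2)
  have h2 : ∑ j ∈ Finset.Ico c k, (if j < c then f j else 0) = 0 :=
    Finset.sum_eq_zero (fun j hj => if_neg (by simp only [Finset.mem_Ico] at hj; omega))
  rw [h1, h2, add_zero, ← Finset.range_eq_Ico]


lemma two_ne' : (2:ℤ) ≠ 0 := by norm_num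

lemma hdvd_lemma (b : ℕ) : 2 * ((b:ℤ) * ((b:ℤ) - 1) / 2) = (b:ℤ) * ((b:ℤ) - 1) := by
  have : (2:ℤ) ∣ (b:ℤ) * ((b:ℤ) - 1) := by
    rcases Int.even_or_odd (b:ℤ) with h | h
    · exact Dvd.dvd.mul_right h.two_dvd _
    · exact Dvd.dvd.mul_left (by obtain ⟨m, hm⟩ := h; exact ⟨m, by omega⟩) _
  exact Int.mul_ediv_cancel' this

lemma T_gauss (k : ℕ) : 2 * ∑ i : Fin k, ((i:ℕ):ℤ) = (k:ℤ) * ((k:ℤ) - 1) := by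
  rw [Fin.sum_univ_eq_sum_range (fun j => (j:ℤ)) k]; exact gauss k

theorem stmt4 (b ℓ : ℕ) :
    IsGreatest (Sset b ℓ) ((b : ℤ) * ((b : ℤ) - 1) / 2 + 2 * (b : ℤ) * (ℓ : ℤ) + (ℓ : ℤ) ^ 2)
      ∧
    IsLeast (Sset b ℓ) ((b : ℤ) * ((b : ℤ) - 1) / 2 - (ℓ : ℤ) ^ 2) := by
  have hne : pd ≠ md := pm_ne
  have hdvd := hdvd_lemma b
  -- upper bound
  have hub : ∀ a ∈ Sset b ℓ, a ≤ (b:ℤ) * ((b:ℤ) - 1) / 2 + 2 * (b:ℤ) * (ℓ:ℤ) + (ℓ:ℤ)^2 := by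
    rintro a ⟨k, d, hd, hcard, hval⟩
    obtain ⟨h1, h0⟩ := val_comp d hd
    set s := Finset.univ.filter (fun i : Fin k => d i = md) with hs
    rw [hval] at h1 h0
    simp only [Matrix.cons_val_one, Matrix.head_cons, Matrix.cons_val_zero] at h1 h0
    rw [hcard] at h1
    have hk : (k:ℤ) = (b:ℤ) + 2 * ℓ := by linarith
    have hT := T_gauss k
    rw [hk] at hT
    have hlb' := sum_lb s
    rw [hcard] at hlb'
    nlinarith [hlb', hT, h0, hdvd]
  -- lower bound
  have hlb : ∀ a ∈ Sset b ℓ, (b:ℤ) * ((b:ℤ) - 1) / 2 - (ℓ:ℤ)^2 ≤ a := by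
    rintro a ⟨k, d, hd, hcard, hval⟩
    obtain ⟨h1, h0⟩ := val_comp d hd
    set s := Finset.univ.filter (fun i : Fin k => d i = md) with hs
    rw [hval] at h1 h0
    simp only [Matrix.cons_val_one, Matrix.head_cons, Matrix.cons_val_zero] at h1 h0
    rw [hcard] at h1
    have hk : (k:ℤ) = (b:ℤ) + 2 * ℓ := by linarith
    have hT := T_gauss k
    rw [hk] at hT
    have hub' := sum_ub s
    rw [hcard, hk] at hub'
    nlinarith [hub', hT, h0, hdvd]
  -- membership for max
  have hmemmax : ((b:ℤ) * ((b:ℤ) - 1) / 2 + 2 * (b:ℤ) * (ℓ:ℤ) + (ℓ:ℤ)^2) ∈ Sset b ℓ := by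
    refine ⟨b + 2 * ℓ, fun i => if (i:ℕ) < ℓ then md else pd, ?_, ?_, ?_⟩
    · intro i; by_cases h : (i:ℕ) < ℓ <;> simp [h]
    · have hfe : (Finset.univ.filter
          (fun i : Fin (b + 2*ℓ) => (if (i:ℕ) < ℓ then md else pd) = md))
          = Finset.univ.filter (fun i : Fin (b + 2*ℓ) => (i:ℕ) < ℓ) := by
        ext i
        by_cases h : (i:ℕ) < ℓ <;> simp [h, hne]
      rw [hfe, Finset.card_filter,
        Fin.sum_univ_eq_sum_range (fun j => if j < ℓ then 1 else 0) (b + 2*ℓ),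
        range_ite_sum ℓ (b + 2*ℓ) (by omega) (fun _ => 1)]
      simp
    · have hd : ∀ i : Fin (b + 2*ℓ), (if (i:ℕ) < ℓ then md else pd) = pd ∨
          (if (i:ℕ) < ℓ then md else pd) = md := by
        intro i; by_cases h : (i:ℕ) < ℓ <;> simp [h]
      obtain ⟨h1, h0⟩ := val_comp _ hd
      have hfe : (Finset.univ.filter
          (fun i : Fin (b + 2*ℓ) => (if (i:ℕ) < ℓ then md else pd) = md))
          = Finset.univ.filter (fun i : Fin (b + 2*ℓ) => (i:ℕ) < ℓ) := by
        ext i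
        by_cases h : (i:ℕ) < ℓ <;> simp [h, hne]
      rw [hfe] at h1 h0
      have hcard2 : (Finset.univ.filter (fun i : Fin (b + 2*ℓ) => (i:ℕ) < ℓ)).card = ℓ := by
        rw [Finset.card_filter,
          Fin.sum_univ_eq_sum_range (fun j => if j < ℓ then 1 else 0) (b + 2*ℓ),
          range_ite_sum ℓ (b + 2*ℓ) (by omega) (fun _ => 1)]
        simp
      have hsum2 : ∑ i ∈ Finset.univ.filter (fun i : Fin (b + 2*ℓ) => (i:ℕ) < ℓ),
          ((i:ℕ):ℤ) = ∑ j ∈ Finset.range ℓ, (j:ℤ) := by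
        rw [Finset.sum_filter,
          Fin.sum_univ_eq_sum_range (fun j => if j < ℓ then (j:ℤ) else 0) (b + 2*ℓ),
          range_ite_sum ℓ (b + 2*ℓ) (by omega) (fun j => (j:ℤ))]
      rw [hcard2] at h1
      have hT := T_gauss (b + 2*ℓ)
      have hG := gauss ℓ
      rw [hsum2] at h0
      have hvec : val1 (fun i : Fin (b + 2*ℓ) => if (i:ℕ) < ℓ then md else pd)
          = ![val1 (fun i : Fin (b + 2*ℓ) => if (i:ℕ) < ℓ then md else pd) 0,
             val1 (fun i : Fin (b + 2*ℓ) => if (i:ℕ) < ℓ then md else pd) 1] := by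
        funext j; fin_cases j <;> rfl
      rw [hvec, h0, h1]
      have e0 : (∑ i : Fin (b + 2*ℓ), ((i:ℕ):ℤ)) - 2 * ∑ j ∈ Finset.range ℓ, (j:ℤ)
          = (b:ℤ) * ((b:ℤ) - 1) / 2 + 2 * (b:ℤ) * (ℓ:ℤ) + (ℓ:ℤ)^2 := by
        refine mul_left_cancel₀ two_ne' ?_
        push_cast at hT
        nlinarith [hT, hG, hdvd]
      have e1 : ((b + 2*ℓ : ℕ) : ℤ) - 2 * (ℓ:ℤ) = (b:ℤ) := by push_cast; ring
      rw [e0, e1]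
  -- membership for min
  have hmemmin : ((b:ℤ) * ((b:ℤ) - 1) / 2 - (ℓ:ℤ)^2) ∈ Sset b ℓ := by
    refine ⟨b + 2 * ℓ, fun i => if (i:ℕ) < b + ℓ then pd else md, ?_, ?_, ?_⟩
    · intro i; by_cases h : (i:ℕ) < b + ℓ <;> simp [h]
    · have hfe : (Finset.univ.filter
          (fun i : Fin (b + 2*ℓ) => (if (i:ℕ) < b + ℓ then pd else md) = md))
          = Finset.univ.filter (fun i : Fin (b + 2*ℓ) => ¬ ((i:ℕ) < b + ℓ)) := by
        ext i
        by_cases h : (i:ℕ) < b + ℓ <;> simp [h, hne]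
      rw [hfe]
      have hsplit := Finset.card_filter_add_card_filter_not
        (s := (Finset.univ : Finset (Fin (b + 2*ℓ)))) (p := fun i => (i:ℕ) < b + ℓ)
      have hcardp : (Finset.univ.filter (fun i : Fin (b + 2*ℓ) => (i:ℕ) < b + ℓ)).card
          = b + ℓ := by
        rw [Finset.card_filter,
          Fin.sum_univ_eq_sum_range (fun j => if j < b + ℓ then 1 else 0) (b + 2*ℓ),
          range_ite_sum (b + ℓ) (b + 2*ℓ) (by omega) (fun _ => 1)]
        simp
      have hcu : (Finset.univ : Finset (Fin (b + 2*ℓ))).card = b + 2*ℓ := by simp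
      omega
    · have hd : ∀ i : Fin (b + 2*ℓ), (if (i:ℕ) < b + ℓ then pd else md) = pd ∨
          (if (i:ℕ) < b + ℓ then pd else md) = md := by
        intro i; by_cases h : (i:ℕ) < b + ℓ <;> simp [h]
      obtain ⟨h1, h0⟩ := val_comp _ hd
      have hfe : (Finset.univ.filter
          (fun i : Fin (b + 2*ℓ) => (if (i:ℕ) < b + ℓ then pd else md) = md))
          = Finset.univ.filter (fun i : Fin (b + 2*ℓ) => ¬ ((i:ℕ) < b + ℓ)) := by
        ext i
        by_cases h : (i:ℕ) < b + ℓ <;> simp [h, hne]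
      rw [hfe] at h1 h0
      have hsplit := Finset.card_filter_add_card_filter_not
        (s := (Finset.univ : Finset (Fin (b + 2*ℓ)))) (p := fun i => (i:ℕ) < b + ℓ)
      have hcardp : (Finset.univ.filter (fun i : Fin (b + 2*ℓ) => (i:ℕ) < b + ℓ)).card
          = b + ℓ := by
        rw [Finset.card_filter,
          Fin.sum_univ_eq_sum_range (fun j => if j < b + ℓ then 1 else 0) (b + 2*ℓ),
          range_ite_sum (b + ℓ) (b + 2*ℓ) (by omega) (fun _ => 1)]
        simp
      have hcu : (Finset.univ : Finset (Fin (b + 2*ℓ))).card = b + 2*ℓ := by simp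
      have hcardn : (Finset.univ.filter (fun i : Fin (b + 2*ℓ) => ¬ ((i:ℕ) < b + ℓ))).card
          = ℓ := by omega
      have hsumsplit := Finset.sum_filter_add_sum_filter_not
        (Finset.univ : Finset (Fin (b + 2*ℓ))) (fun i => (i:ℕ) < b + ℓ)
        (fun i => ((i:ℕ):ℤ))
      have hsump : ∑ i ∈ Finset.univ.filter (fun i : Fin (b + 2*ℓ) => (i:ℕ) < b + ℓ),
          ((i:ℕ):ℤ) = ∑ j ∈ Finset.range (b + ℓ), (j:ℤ) := by
        rw [Finset.sum_filter,
          Fin.sum_univ_eq_sum_range (fun j => if j < b + ℓ then (j:ℤ) else 0) (b + 2*ℓ),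
          range_ite_sum (b + ℓ) (b + 2*ℓ) (by omega) (fun j => (j:ℤ))]
      rw [hcardn] at h1
      have hT := T_gauss (b + 2*ℓ)
      have hG := gauss (b + ℓ)
      have hvec : val1 (fun i : Fin (b + 2*ℓ) => if (i:ℕ) < b + ℓ then pd else md)
          = ![val1 (fun i : Fin (b + 2*ℓ) => if (i:ℕ) < b + ℓ then pd else md) 0,
             val1 (fun i : Fin (b + 2*ℓ) => if (i:ℕ) < b + ℓ then pd else md) 1] := by
        funext j; fin_cases j <;> rfl
      rw [hvec, h0, h1]
      have e0 : (∑ i : Fin (b + 2*ℓ), ((i:ℕ):ℤ))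
          - 2 * ∑ i ∈ Finset.univ.filter (fun i : Fin (b + 2*ℓ) => ¬ ((i:ℕ) < b + ℓ)),
            ((i:ℕ):ℤ)
          = (b:ℤ) * ((b:ℤ) - 1) / 2 - (ℓ:ℤ)^2 := by
        refine mul_left_cancel₀ two_ne' ?_
        push_cast at hT hG
        nlinarith [hT, hG, hdvd, hsumsplit, hsump]
      have e1 : ((b + 2*ℓ : ℕ) : ℤ) - 2 * (ℓ:ℤ) = (b:ℤ) := by push_cast; ring
      rw [e0, e1]
  exact ⟨⟨hmemmax, hub⟩, ⟨hmemmin, hlb⟩⟩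
end

section
/- In base M = [[-1,1],[0,-1]] with digits p = (0,1)^T, z = (0,0)^T: for α, β ∈ ℕ, the word (pz)^α pp (zp)^β represents the vector (a, b)^T with b = β - α and a = α² + 2αβ - β² + β + 2α + 1. -/
/-- The Jordan block `[[-1,1],[0,-1]]`. -/
def M2 : Matrix (Fin 2) (Fin 2) ℤ := !![-1, 1; 0, -1]

/-- The zero digit `z = (0,0)ᵀ`. -/
def zd : Fin 2 → ℤ := ![0, 0]

/-- The vector represented by the word `d_{k-1} … d_0`, namely `∑ M^i d_i`. -/
def val2 {k : ℕ} (d : Fin k → (Fin 2 → ℤ)) : Fin 2 → ℤ :=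
  ∑ i : Fin k, (M2 ^ (i : ℕ)).mulVec (d i)

/-- The word `(pz)^α p p (zp)^β`, read with `d_{k-1}` leftmost:
the `2β` least significant digits alternate `… z p z p` (so `p` at even positions),
the next two digits are both `p`, and the `2α` most significant digits alternate
`p z p z …` (so `p` at odd offsets). -/
def wordB (α β : ℕ) : Fin (2 * α + 2 + 2 * β) → (Fin 2 → ℤ) := fun i =>
  if (i : ℕ) < 2 * β then (if Even (i : ℕ) then pd else zd)
  else if (i : ℕ) < 2 * β + 2 then pd
  else (if Even ((i : ℕ) - (2 * β + 2)) then zd else pd)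

def ev (i : ℕ) : Fin 2 → ℤ := ((-1 : ℤ) ^ i) • ![-(i : ℤ), 1]

lemma M2_pow (i : ℕ) : M2 ^ i = ((-1 : ℤ) ^ i) • !![1, -(i : ℤ); 0, 1] := by
  induction i with
  | zero => simp [Matrix.one_fin_two]
  | succ n ih =>
    have key : !![1, -(n : ℤ); 0, 1] * M2 = (-1 : ℤ) • !![1, -((n + 1 : ℕ) : ℤ); 0, 1] := by
      ext a b
      fin_cases a <;> fin_cases b <;>
        simp [M2, Matrix.mul_apply, Fin.sum_univ_two, Matrix.smul_apply] <;> push_cast <;> ring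
    rw [pow_succ, ih, Matrix.smul_mul, key, pow_succ, mul_comm ((-1:ℤ)^n), ← smul_smul,
      smul_comm]

lemma mulVec_pd (i : ℕ) : (M2 ^ i).mulVec pd = ev i := by
  rw [M2_pow]
  funext j
  fin_cases j <;>
    simp [Matrix.mulVec, dotProduct, Fin.sum_univ_two, pd, ev, Matrix.smul_apply]

lemma mulVec_zd (i : ℕ) : (M2 ^ i).mulVec zd = 0 := by
  have : zd = 0 := by funext j; fin_cases j <;> simp [zd]
  rw [this, Matrix.mulVec_zero]

lemma sumA (β : ℕ) :
    ∑ i ∈ Finset.range (2 * β), (if Even i then ev i else 0)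
      = ![(β : ℤ) - (β : ℤ) ^ 2, (β : ℤ)] := by
  induction β with
  | zero => funext j; fin_cases j <;> simp
  | succ n ih =>
    rw [show 2 * (n + 1) = (2 * n) + 1 + 1 by ring, Finset.sum_range_succ,
      Finset.sum_range_succ, ih]
    have h1 : Even (2 * n) := even_two_mul n
    have h2 : ¬ Even (2 * n + 1) := by simp [Nat.even_add_one, h1]
    rw [if_pos h1, if_neg h2]
    funext j
    fin_cases j <;> simp [ev, h1.neg_one_pow] <;> push_cast <;> ring

lemma sumC (c α : ℕ) (hc : Even c) :
    ∑ i ∈ Finset.range (2 * α), (if Even i then (0 : Fin 2 → ℤ) else ev (c + i))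
      = ![(α : ℤ) * (c : ℤ) + (α : ℤ) ^ 2, -(α : ℤ)] := by
  induction α with
  | zero => funext j; fin_cases j <;> simp
  | succ n ih =>
    rw [show 2 * (n + 1) = (2 * n) + 1 + 1 by ring, Finset.sum_range_succ,
      Finset.sum_range_succ, ih]
    have h1 : Even (2 * n) := even_two_mul n
    have h2 : ¬ Even (2 * n + 1) := by simp [Nat.even_add_one, h1]
    have h3 : ¬ Even (c + (2 * n + 1)) := by
      simp [Nat.even_add, hc, h2]
    rw [if_pos h1, if_neg h2]
    funext j
    fin_cases j <;>
      simp [ev, (Nat.not_even_iff_odd.mp h3).neg_one_pow] <;> push_cast <;> ring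

theorem stmt14 (α β : ℕ) :
    val2 (wordB α β)
      = ![(α : ℤ) ^ 2 + 2 * (α : ℤ) * (β : ℤ) - (β : ℤ) ^ 2 + (β : ℤ) + 2 * (α : ℤ) + 1,
          (β : ℤ) - (α : ℤ)] := by
  set F : ℕ → (Fin 2 → ℤ) := fun n =>
    if n < 2 * β then (if Even n then ev n else 0)
    else if n < 2 * β + 2 then ev n
    else (if Even (n - (2 * β + 2)) then 0 else ev n) with hF
  have hval : val2 (wordB α β) = ∑ i ∈ Finset.range (2 * α + 2 + 2 * β), F i := by
    rw [val2, ← Fin.sum_univ_eq_sum_range]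
    refine Finset.sum_congr rfl fun i _ => ?_
    simp only [wordB, hF]
    split_ifs <;> simp only [mulVec_pd, mulVec_zd]
  rw [hval, show 2 * α + 2 + 2 * β = 2 * β + (2 + 2 * α) by ring,
    Finset.sum_range_add, Finset.sum_range_add]
  have hA : ∑ i ∈ Finset.range (2 * β), F i = ![(β : ℤ) - (β : ℤ) ^ 2, (β : ℤ)] := by
    rw [← sumA β]
    refine Finset.sum_congr rfl fun i hi => ?_
    rw [Finset.mem_range] at hi
    simp only [hF, if_pos hi]
  have hB : ∑ i ∈ Finset.range 2, F (2 * β + i) = ev (2 * β) + ev (2 * β + 1) := by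
    rw [Finset.sum_range_succ, Finset.sum_range_succ, Finset.sum_range_zero]
    simp only [hF]
    rw [if_neg (by omega), if_pos (by omega), if_neg (by omega), if_pos (by omega)]
    abel
  have hC : ∑ i ∈ Finset.range (2 * α), F (2 * β + (2 + i))
      = ![(α : ℤ) * ((2 * β + 2 : ℕ) : ℤ) + (α : ℤ) ^ 2, -(α : ℤ)] := by
    have := sumC (2 * β + 2) α (by exact ⟨β + 1, by ring⟩)
    rw [← this]
    refine Finset.sum_congr rfl fun i hi => ?_
    simp only [hF]
    rw [if_neg (by omega), if_neg (by omega),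
      show 2 * β + (2 + i) - (2 * β + 2) = i by omega,
      show 2 * β + 2 + i = 2 * β + (2 + i) by ring]
  rw [hA, hB, hC]
  have he1 : Even (2 * β) := even_two_mul β
  have he2 : ¬ Even (2 * β + 1) := by simp [Nat.even_add_one, he1]
  funext j
  fin_cases j <;>
    simp [ev, he1.neg_one_pow, (Nat.not_even_iff_odd.mp he2).neg_one_pow] <;>
    push_cast <;> ring
end
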